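/- Let G be a finite simple graph and let A₁, A₂, B be pairwise disjoint non-empty subsets of V(G). Suppose for each i ∈ {1,2} there exists a set 𝒫ᵢ of Aᵢ–B paths in G ∖ A_{3−i} with |𝒫ᵢ| = 2|Aᵢ|, such that the paths in 𝒫ᵢ are pairwise vertex-disjoint outside of Aᵢ and every vertex of Aᵢ lies on exactly two paths of 𝒫ᵢ. Then there exist |A₁| + |A₂| pairwise vertex-disjoint (A₁ ∪ A₂)–B paths in G. -/

import Mathlib

open SimpleGraph

namespace MengerList

variable {V : Type*}

/-- `S` separates `A` from `B` in `G`: every walk (as a chain-list) from `A` to `B` meets `S`. -/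
def Sep (G : SimpleGraph V) (A B : Set V) (S : Finset V) : Prop :=
  ∀ (l : List V) (h : l ≠ []), l.IsChain G.Adj → l.head h ∈ A → l.getLast h ∈ B →
    ∃ s ∈ S, s ∈ l

/-- A strict `A`–`B` path as a list. -/
structure Strict (G : SimpleGraph V) (A B : Set V) (l : List V) : Prop where
  ne : l ≠ []
  chain : l.IsChain G.Adj
  nodup : l.Nodup
  headA : l.head ne ∈ A
  lastB : l.getLast ne ∈ B
  onlyA : ∀ w ∈ l, w ∈ A → w = l.head ne
  onlyB : ∀ w ∈ l, w ∈ B → w = l.getLast ne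

lemma trimA (G : SimpleGraph V) (A : Set V) :
    ∀ (l : List V), l.IsChain G.Adj → l.Nodup → (∃ w ∈ l, w ∈ A) →
    ∃ (m : List V) (hm : m ≠ []), m.IsChain G.Adj ∧ m.Nodup ∧ m.head hm ∈ A ∧
      (∀ w ∈ m, w ∈ A → w = m.head hm) ∧
      (∀ (hl : l ≠ []), m.getLast hm = l.getLast hl) ∧ (∀ x ∈ m, x ∈ l) := by
  intro l
  induction l with
  | nil => rintro _ _ ⟨w, hw, -⟩; exact absurd hw (List.not_mem_nil)
  | cons a t IH =>
    intro hc hn hex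
    by_cases hta : ∃ w ∈ t, w ∈ A
    · have ht : t ≠ [] := by rintro rfl; exact absurd hta (by simp)
      obtain ⟨m, hm, h1, h2, h3, h4, h5, h6⟩ := IH hc.tail hn.of_cons hta
      exact ⟨m, hm, h1, h2, h3, h4, fun _ => by
        rw [h5 ht, List.getLast_cons ht], fun x hx => List.mem_cons_of_mem _ (h6 x hx)⟩
    · have ha : a ∈ A := by
        obtain ⟨w, hw, hwA⟩ := hex
        rcases List.mem_cons.1 hw with rfl | hw
        · exact hwA
        · exact absurd ⟨w, hw, hwA⟩ hta
      refine ⟨a :: t, by simp, hc, hn, ha, ?_, fun _ => rfl, fun x hx => hx⟩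
      intro w hw hwA
      rcases List.mem_cons.1 hw with rfl | hw
      · rfl
      · exact absurd ⟨w, hw, hwA⟩ hta

lemma trimB (G : SimpleGraph V) (B : Set V) :
    ∀ (l : List V) (hl : l ≠ []), l.IsChain G.Adj → l.Nodup → (∃ w ∈ l, w ∈ B) →
    ∃ (m : List V) (hm : m ≠ []), m.IsChain G.Adj ∧ m.Nodup ∧ m.head hm = l.head hl ∧
      m.getLast hm ∈ B ∧ (∀ w ∈ m, w ∈ B → w = m.getLast hm) ∧ (∀ x ∈ m, x ∈ l) := by
  intro l
  induction l with
  | nil => simp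
  | cons a t IH =>
    intro _ hc hn hex
    by_cases haB : a ∈ B
    · refine ⟨[a], by simp, by simp, by simp, rfl, haB, ?_, by simp⟩
      intro w hw _; simpa using hw
    · have hta : ∃ w ∈ t, w ∈ B := by
        obtain ⟨w, hw, hwB⟩ := hex
        rcases List.mem_cons.1 hw with rfl | hw
        · exact absurd hwB haB
        · exact ⟨w, hw, hwB⟩
      have ht : t ≠ [] := by rintro rfl; exact absurd hta (by simp)
      obtain ⟨m, hm, h1, h2, h3, h4, h5, h6⟩ := IH ht hc.tail hn.of_cons hta
      have hadj : G.Adj a (m.head hm) := by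
        rw [h3]
        cases t with
        | nil => exact absurd rfl ht
        | cons b t' => exact (List.isChain_cons_cons.1 hc).1
      have hnotmem : a ∉ m := fun h => (List.nodup_cons.1 hn).1 (h6 a h)
      refine ⟨a :: m, by simp, ?_, List.nodup_cons.2 ⟨hnotmem, h2⟩, by
          cases m with
          | nil => exact absurd rfl hm
          | cons b m' => rfl, ?_, ?_, ?_⟩
      · cases m with
        | nil => exact absurd rfl hm
        | cons b m' => exact List.isChain_cons_cons.2 ⟨hadj, h1⟩
      · rwa [List.getLast_cons hm]
      · intro w hw hwB
        rw [List.getLast_cons hm]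
        rcases List.mem_cons.1 hw with rfl | hw
        · exact absurd hwB haB
        · exact h5 w hw hwB
      · intro x hx
        rcases List.mem_cons.1 hx with rfl | hx
        · exact List.mem_cons_self
        · exact List.mem_cons_of_mem _ (h6 x hx)

/-- Trim a nodup `A`–`B` chain to a strict `A`–`B` path inside it. -/
lemma trim (G : SimpleGraph V) (A B : Set V) (l : List V) (hl : l ≠ [])
    (hc : l.IsChain G.Adj) (hn : l.Nodup) (ha : l.head hl ∈ A) (hb : l.getLast hl ∈ B) :
    ∃ m, Strict G A B m ∧ ∀ x ∈ m, x ∈ l := by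
  obtain ⟨m1, hm1, c1, n1, hA1, oA1, hlast1, sub1⟩ :=
    trimA G A l hc hn ⟨l.head hl, List.head_mem hl, ha⟩
  have hb1 : m1.getLast hm1 ∈ B := by rw [hlast1 hl]; exact hb
  obtain ⟨m, hm, c2, n2, hhead2, hB2, oB2, sub2⟩ :=
    trimB G B m1 hm1 c1 n1 ⟨m1.getLast hm1, List.getLast_mem hm1, hb1⟩
  refine ⟨m, ⟨hm, c2, n2, by rw [hhead2]; exact hA1, hB2, ?_, oB2⟩,
    fun x hx => sub1 x (sub2 x hx)⟩
  intro w hw hwA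
  rw [hhead2]
  exact oA1 w (sub2 w hw) hwA

/-- Build a walk from a chain-list. -/
def toWalk (G : SimpleGraph V) :
    ∀ (l : List V) (h : l ≠ []) (_ : l.IsChain G.Adj), G.Walk (l.head h) (l.getLast h)
  | [_], _, _ => Walk.nil
  | a :: b :: t, _, hc =>
      Walk.cons (List.isChain_cons_cons.1 hc).1
        (toWalk G (b :: t) (List.cons_ne_nil _ _) (List.isChain_cons_cons.1 hc).2)

lemma support_toWalk (G : SimpleGraph V) :
    ∀ (l : List V) (h : l ≠ []) (hc : l.IsChain G.Adj), (toWalk G l h hc).support = l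
  | [_], _, _ => rfl
  | _ :: b :: t, _, hc => by
      rw [toWalk]
      exact congrArg (List.cons _) (support_toWalk G (b :: t) _ _)

lemma head_congr {l l' : List V} (e : l = l') (h : l ≠ []) (h' : l' ≠ []) :
    l.head h = l'.head h' := by subst e; rfl

lemma getLast_congr {l l' : List V} (e : l = l') (h : l ≠ []) (h' : l' ≠ []) :
    l.getLast h = l'.getLast h' := by subst e; rfl

lemma head_append_cons (l₁ : List V) (a : V) (l₂ l₃ : List V) :
    (l₁ ++ a :: l₂).head (by simp) = (l₁ ++ a :: l₃).head (by simp) := by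
  cases l₁ <;> simp

lemma getLast_append_cons (l₁ : List V) (a : V) (l₂ : List V) :
    (l₁ ++ a :: l₂).getLast (by simp) = (a :: l₂).getLast (by simp) := by
  rw [List.getLast_append]
  simp

lemma sep_symm {G : SimpleGraph V} {A B : Set V} {S : Finset V} (h : Sep G A B S) :
    Sep G B A S := by
  intro l hl hc ha hb
  have hrl : l.reverse ≠ [] := by simpa using hl
  have hcr : l.reverse.IsChain G.Adj := by
    rw [List.isChain_reverse]
    exact hc.imp fun _ _ hab => hab.symm
  obtain ⟨s, hs, hsl⟩ := h l.reverse hrl hcr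
    (by rw [List.head_reverse]; exact hb) (by rw [List.getLast_reverse]; exact ha)
  exact ⟨s, hs, by simpa using hsl⟩

lemma sep_mono {G G' : SimpleGraph V} (hle : G' ≤ G) {A B : Set V} {S : Finset V}
    (h : Sep G A B S) : Sep G' A B S :=
  fun l hl hc ha hb => h l hl (hc.imp fun _ _ hab => hle hab) ha hb

lemma strict_mono' {G G' : SimpleGraph V} (hle : G' ≤ G) {A B : Set V} {l : List V}
    (h : Strict G' A B l) : Strict G A B l :=
  ⟨h.ne, h.chain.imp fun _ _ hab => hle hab, h.nodup, h.headA, h.lastB, h.onlyA, h.onlyB⟩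

lemma finish (G : SimpleGraph V) (A B : Set V) (k : ℕ) (R : Fin k → List V)
    (h : ∀ i, ∃ (hi : R i ≠ []), (R i).IsChain G.Adj ∧ (R i).Nodup ∧
      (R i).head hi ∈ A ∧ (R i).getLast hi ∈ B)
    (hd : ∀ i j, i ≠ j → ∀ w ∈ R i, w ∉ R j) :
    ∃ f : Fin k → List V, (∀ i, Strict G A B (f i)) ∧
      ∀ i j, i ≠ j → ∀ w ∈ f i, w ∉ f j := by
  have h' : ∀ i, ∃ m, Strict G A B m ∧ ∀ x ∈ m, x ∈ R i := by
    intro i; obtain ⟨hi, hc, hn, ha, hb⟩ := h i; exact trim G A B _ hi hc hn ha hb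
  choose f hf hsub using h'
  exact ⟨f, hf, fun i j hij w hwi hwj => hd i j hij w (hsub i w hwi) (hsub j w hwj)⟩

lemma glue (G : SimpleGraph V) (A B : Set V) (S : Finset V) (hS : Sep G A B S) (k : ℕ)
    (P Q : Fin k → List V) (hP : ∀ i, Strict G A ↑S (P i)) (hQ : ∀ i, Strict G ↑S B (Q i))
    (hPd : ∀ i j, i ≠ j → ∀ w ∈ P i, w ∉ P j) (hQd : ∀ i j, i ≠ j → ∀ w ∈ Q i, w ∉ Q j)
    (hm : ∀ i, (Q i).head (hQ i).ne = (P i).getLast (hP i).ne) :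
    ∃ f : Fin k → List V, (∀ i, Strict G A B (f i)) ∧
      ∀ i j, i ≠ j → ∀ w ∈ f i, w ∉ f j := by
  classical
  have key : ∀ i j v, v ∈ P i → v ∈ Q j →
      v = (P i).getLast (hP i).ne ∧ v = (Q j).head (hQ j).ne := by
    intro i j v hvP hvQ
    obtain ⟨p₁, p₂, hPeq⟩ := List.append_of_mem hvP
    obtain ⟨q₁, q₂, hQeq⟩ := List.append_of_mem hvQ
    have hcP : (p₁ ++ v :: p₂).IsChain G.Adj := hPeq ▸ (hP i).chain
    have hcQ : (q₁ ++ v :: q₂).IsChain G.Adj := hQeq ▸ (hQ j).chain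
    have hcw : (p₁ ++ v :: q₂).IsChain G.Adj :=
      List.isChain_split.2 ⟨(List.isChain_split.1 hcP).1, (List.isChain_split.1 hcQ).2⟩
    have hwne : (p₁ ++ v :: q₂) ≠ [] := by simp
    have hhead : (p₁ ++ v :: q₂).head hwne ∈ A := by
      have e1 : (p₁ ++ v :: q₂).head hwne = (P i).head (hP i).ne :=
        (head_append_cons p₁ v q₂ p₂).trans (head_congr hPeq.symm (by simp) (hP i).ne)
      rw [e1]; exact (hP i).headA
    have hlast : (p₁ ++ v :: q₂).getLast hwne ∈ B := by
      have e2 : (p₁ ++ v :: q₂).getLast hwne = (Q j).getLast (hQ j).ne :=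
        (getLast_append_cons p₁ v q₂).trans
          (((getLast_append_cons q₁ v q₂).symm).trans (getLast_congr hQeq.symm (by simp) (hQ j).ne))
      rw [e2]; exact (hQ j).lastB
    obtain ⟨s, hsS, hsw⟩ := hS _ hwne hcw hhead hlast
    have hPnd : (p₁ ++ v :: p₂).Nodup := hPeq ▸ (hP i).nodup
    have hQnd : (q₁ ++ v :: q₂).Nodup := hQeq ▸ (hQ j).nodup
    rcases List.mem_append.1 hsw with hs1 | hs2
    · -- s ∈ p₁ : contradiction
      exfalso
      have hsP : s ∈ P i := by rw [hPeq]; exact List.mem_append_left _ hs1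
      have hsLast : s = (P i).getLast (hP i).ne := (hP i).onlyB s hsP hsS
      have h1 : (P i).getLast (hP i).ne ∈ v :: p₂ := by
        have e3 : (P i).getLast (hP i).ne = (v :: p₂).getLast (by simp) :=
          (getLast_congr hPeq (hP i).ne (by simp)).trans (getLast_append_cons p₁ v p₂)
        rw [e3]; exact List.getLast_mem _
      exact (List.nodup_append.1 hPnd).2.2 _ hs1 _ (hsLast ▸ h1) rfl
    · rcases List.mem_cons.1 hs2 with rfl | hs3
      · constructor
        · exact (hP i).onlyB s hvP hsS
        · exact (hQ j).onlyA s hvQ hsS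
      · -- s ∈ q₂ : contradiction
        exfalso
        have hsQ : s ∈ Q j := by
          rw [hQeq]; exact List.mem_append_right _ (List.mem_cons_of_mem _ hs3)
        have hsHead : s = (q₁ ++ v :: q₂).head (by simp) :=
          ((hQ j).onlyA s hsQ hsS).trans (head_congr hQeq (hQ j).ne (by simp))
        cases q₁ with
        | nil =>
          simp only [List.nil_append] at hsHead hQnd
          rw [List.head_cons] at hsHead
          exact (List.nodup_cons.1 hQnd).1 (hsHead ▸ hs3)
        | cons c q₁' =>
          have : s = c := by simpa using hsHead
          exact (List.nodup_append.1 hQnd).2.2 _ (this ▸ (List.mem_cons_self (a := c) (l := q₁')))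
            _ (List.mem_cons_of_mem _ hs3) rfl
  -- construction
  have hQcons : ∀ i, (P i).getLast (hP i).ne :: (Q i).tail = Q i := fun i => by
    rw [← hm i]; exact List.cons_head_tail _
  set R : Fin k → List V := fun i => (P i).dropLast ++ Q i with hR
  have hRchain : ∀ i, (R i).IsChain G.Adj := by
    intro i
    have h1 : ((P i).dropLast ++ (P i).getLast (hP i).ne :: (Q i).tail).IsChain G.Adj := by
      refine List.isChain_split.2 ⟨?_, ?_⟩
      · rw [List.dropLast_append_getLast (hP i).ne]; exact (hP i).chain
      · rw [hQcons]; exact (hQ i).chain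
    rw [hQcons] at h1
    exact h1
  have hRnd : ∀ i, (R i).Nodup := by
    intro i
    refine List.nodup_append.2 ⟨(List.dropLast_sublist _).nodup (hP i).nodup, (hQ i).nodup, ?_⟩
    intro a ha _ hq rfl
    have haP : a ∈ P i := List.mem_of_mem_dropLast ha
    have := (key i i a haP hq).1
    subst this
    have hPd2 : ((P i).dropLast ++ [(P i).getLast (hP i).ne]).Nodup := by
      rw [List.dropLast_append_getLast (hP i).ne]; exact (hP i).nodup
    exact (List.nodup_append.1 hPd2).2.2 _ ha _ (List.mem_singleton_self _) rfl
  have hRne : ∀ i, R i ≠ [] := by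
    intro i h
    exact (hQ i).ne (by simpa using (List.append_eq_nil_iff.1 h).2)
  have hReq : ∀ i, R i = P i ++ (Q i).tail := by
    intro i
    conv_rhs => rw [← List.dropLast_append_getLast (hP i).ne]
    rw [List.append_assoc, List.singleton_append, hQcons]
  have hRhead : ∀ i, (R i).head (hRne i) ∈ A := by
    intro i
    have h1 : (R i).head (hRne i) = (P i).head (hP i).ne := by
      refine (head_congr (hReq i) (hRne i) (by simp [(hP i).ne])).trans ?_
      rw [List.head_append]
      simp [List.isEmpty_iff, (hP i).ne]
    rw [h1]; exact (hP i).headA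
  have hRlast : ∀ i, (R i).getLast (hRne i) ∈ B := by
    intro i
    have h1 : (R i).getLast (hRne i) = (Q i).getLast (hQ i).ne := by
      refine (getLast_congr (show R i = (P i).dropLast ++ Q i from rfl) (hRne i)
        (by simp [(hQ i).ne])).trans ?_
      rw [List.getLast_append]
      simp [List.isEmpty_iff, (hQ i).ne]
    rw [h1]; exact (hQ i).lastB
  have hsubP : ∀ i w, w ∈ R i → w ∈ P i ∨ w ∈ Q i := by
    intro i w hw
    rcases List.mem_append.1 hw with h | h
    · exact Or.inl (List.mem_of_mem_dropLast h)
    · exact Or.inr h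
  have hdisj : ∀ i j, i ≠ j → ∀ w ∈ R i, w ∉ R j := by
    intro i j hij w hwi hwj
    rcases hsubP i w hwi with h1 | h1 <;> rcases hsubP j w hwj with h2 | h2
    · exact hPd i j hij w h1 h2
    · -- w ∈ P i, w ∈ Q j
      have hk := key i j w h1 h2
      have : w ∈ Q i := by
        rw [← hQcons i, ← hk.1]; exact List.mem_cons_self
      refine hQd i j hij w this ?_
      rw [hk.2]; exact List.head_mem _
    · -- w ∈ Q i, w ∈ P j
      have hk := key j i w h2 h1
      have : w ∈ Q j := by
        rw [← hQcons j, ← hk.1]; exact List.mem_cons_self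
      exact hQd i j hij w h1 this
    · exact hQd i j hij w h1 h2
  exact finish G A B k R (fun i => ⟨hRne i, hRchain i, hRnd i, hRhead i, hRlast i⟩) hdisj

lemma chain'_to_del (G : SimpleGraph V) (x y : V) :
    ∀ (l : List V), l.IsChain G.Adj → (∀ v ∈ l.dropLast, v ≠ x ∧ v ≠ y) →
      l.IsChain (G.deleteEdges {s(x, y)}).Adj := by
  intro l
  induction l with
  | nil => intro _ _; simp
  | cons a t IH =>
    intro hc hv
    cases t with
    | nil => simp
    | cons b t' =>
      rw [List.isChain_cons_cons] at hc ⊢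
      obtain ⟨hab, ht⟩ := hc
      have hd : (a :: b :: t').dropLast = a :: (b :: t').dropLast := rfl
      have ha : a ≠ x ∧ a ≠ y := hv a (by rw [hd]; exact List.mem_cons_self)
      refine ⟨?_, IH ht fun v hv' => hv v (by rw [hd]; exact List.mem_cons_of_mem _ hv')⟩
      rw [SimpleGraph.deleteEdges_adj]
      refine ⟨hab, ?_⟩
      intro hmem
      simp only [Set.mem_singleton_iff] at hmem
      rcases Sym2.eq_iff.1 hmem with ⟨h1, _⟩ | ⟨h1, _⟩
      · exact ha.1 h1
      · exact ha.2 h1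

lemma sep_del_AtoS [DecidableEq V] (G : SimpleGraph V) (x y : V) (A B : Set V)
    (S T : Finset V) (hS : Sep G A B S) (hx : x ∈ S) (hy : y ∈ S)
    (hT : Sep (G.deleteEdges {s(x, y)}) A ↑S T) : Sep G A B T := by
  intro l hl hc ha hb
  obtain ⟨s, hsS, hsl⟩ := hS l hl hc ha hb
  set p := l.takeWhile (fun v => v ∉ S) with hp
  set d := l.dropWhile (fun v => v ∉ S) with hd
  have hpd : p ++ d = l := List.takeWhile_append_dropWhile
  have hdne : d ≠ [] := by
    intro h0
    have h1 : p = l := by rw [← hpd, h0, List.append_nil]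
    have h2 := List.mem_takeWhile_imp (l := l) (x := s)
      (p := fun v => v ∉ S) (by rw [← hp, h1]; exact hsl)
    simp only [decide_eq_true_eq] at h2
    exact h2 hsS
  have hdS : d.head hdne ∈ S := by
    have h2 := List.head_dropWhile_not (fun v => v ∉ S) (l := l) (by rw [← hd]; exact hdne)
    simp only [decide_eq_true_eq, decide_eq_false_iff_not, not_not] at h2
    exact h2
  have hld : l = p ++ (d.head hdne :: d.tail) := by rw [List.cons_head_tail, hpd]
  set c := d.head hdne with hcdef
  have hmne : (p ++ [c]) ≠ [] := by simp
  have hmchain : (p ++ [c]).IsChain G.Adj := by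
    have := hc
    rw [hld] at this
    exact (List.isChain_split.1 this).1
  have hmdel : (p ++ [c]).IsChain (G.deleteEdges {s(x, y)}).Adj := by
    refine chain'_to_del G x y _ hmchain ?_
    intro v hv
    rw [List.dropLast_concat] at hv
    have := List.mem_takeWhile_imp (by rw [← hp]; exact hv)
    simp only [decide_eq_true_eq] at this
    constructor
    · rintro rfl; exact this hx
    · rintro rfl; exact this hy
  have hmhead : (p ++ [c]).head hmne ∈ A := by
    have e : (p ++ [c]).head hmne = l.head hl := by
      refine (head_append_cons p c [] d.tail).trans ?_
      exact head_congr hld.symm (by simp) hl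
    rw [e]; exact ha
  have hmlast : (p ++ [c]).getLast hmne ∈ (S : Set V) := by
    have e : (p ++ [c]).getLast hmne = c := List.getLast_concat
    rw [e]; exact hdS
  obtain ⟨t, htT, htm⟩ := hT (p ++ [c]) hmne hmdel hmhead hmlast
  refine ⟨t, htT, ?_⟩
  rcases List.mem_append.1 htm with h | h
  · exact (List.takeWhile_sublist (fun v => decide (v ∉ S))).subset h
  · have hct : t = c := by simpa using h
    rw [hct, hcdef]
    exact (List.dropWhile_sublist (fun v => decide (v ∉ S))).subset (List.head_mem _)

lemma sep_del_StoB [DecidableEq V] (G : SimpleGraph V) (x y : V) (A B : Set V)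
    (S T : Finset V) (hS : Sep G A B S) (hx : x ∈ S) (hy : y ∈ S)
    (hT : Sep (G.deleteEdges {s(x, y)}) ↑S B T) : Sep G A B T :=
  sep_symm (sep_del_AtoS G x y B A S T (sep_symm hS) hx hy (sep_symm hT))

/-! ### Contraction -/

def contract (G : SimpleGraph V) (x y : V) : SimpleGraph V where
  Adj a b := a ≠ b ∧ ((G.Adj a b ∧ a ≠ y ∧ b ≠ y) ∨ (a = x ∧ G.Adj y b ∧ b ≠ y) ∨
    (b = x ∧ G.Adj a y ∧ a ≠ y))
  symm := by
    constructor
    rintro a b ⟨hne, h⟩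
    refine ⟨hne.symm, ?_⟩
    rcases h with ⟨h1, h2, h3⟩ | ⟨h1, h2, h3⟩ | ⟨h1, h2, h3⟩
    · exact Or.inl ⟨h1.symm, h3, h2⟩
    · exact Or.inr (Or.inr ⟨h1, h2.symm, h3⟩)
    · exact Or.inr (Or.inl ⟨h1, h2.symm, h3⟩)
  loopless := ⟨fun a h => h.1 rfl⟩

variable {G : SimpleGraph V} {x y : V}

lemma contract_ne_y (hxy : x ≠ y) {a b : V} (h : (contract G x y).Adj a b) :
    a ≠ y ∧ b ≠ y := by
  obtain ⟨hne, h⟩ := h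
  rcases h with ⟨_, h2, h3⟩ | ⟨h1, _, h3⟩ | ⟨h1, _, h3⟩
  · exact ⟨h2, h3⟩
  · exact ⟨h1 ▸ hxy, h3⟩
  · exact ⟨h3, h1 ▸ hxy⟩

lemma contract_adj_of_ne {a b : V} (h : (contract G x y).Adj a b)
    (hax : a ≠ x) (hbx : b ≠ x) : G.Adj a b := by
  obtain ⟨hne, h⟩ := h
  rcases h with ⟨h1, _, _⟩ | ⟨h1, _, _⟩ | ⟨h1, _, _⟩
  · exact h1
  · exact absurd h1 hax
  · exact absurd h1 hbx

lemma chain'_contract_to_G (hxy : x ≠ y) :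
    ∀ (l : List V), l.IsChain (contract G x y).Adj → (∀ v ∈ l, v ≠ x) →
      l.IsChain G.Adj := by
  intro l
  induction l with
  | nil => intro _ _; simp
  | cons a t IH =>
    intro hc hv
    cases t with
    | nil => simp
    | cons b t' =>
      rw [List.isChain_cons_cons] at hc ⊢
      exact ⟨contract_adj_of_ne hc.1 (hv a (by simp)) (hv b (by simp)),
        IH hc.2 fun v hv' => hv v (List.mem_cons_of_mem _ hv')⟩

/-- Boundary adjacency on the left of `x`. -/
lemma contract_adj_left {a : V} (h : (contract G x y).Adj a x) (hax : a ≠ x) :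
    G.Adj a x ∨ G.Adj a y := by
  obtain ⟨hne, h⟩ := h
  rcases h with ⟨h1, _, _⟩ | ⟨h1, _, _⟩ | ⟨_, h2, _⟩
  · exact Or.inl h1
  · exact absurd h1 hax
  · exact Or.inr h2

lemma contract_adj_right {b : V} (h : (contract G x y).Adj x b) (hbx : b ≠ x) :
    G.Adj x b ∨ G.Adj y b := by
  obtain ⟨hne, h⟩ := h
  rcases h with ⟨h1, _, _⟩ | ⟨_, h2, _⟩ | ⟨h1, _, _⟩
  · exact Or.inl h1
  · exact Or.inr h2
  · exact absurd h1 hbx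

/-- Mapping a `G`-chain into the contraction (with possible stutters). -/
lemma contract_chain_map [DecidableEq V] {l : List V} (hc : l.IsChain G.Adj) :
    (l.map (fun v => if v = y then x else v)).IsChain
      (fun a b => (contract G x y).Adj a b ∨ a = b) := by
  classical
  rw [List.isChain_map]
  refine hc.imp ?_
  intro u v huv
  by_cases hu : u = y <;> by_cases hv' : v = y
  · rw [hu, hv'] at huv; exact absurd huv (G.loopless.irrefl y)
  · rw [hu] at huv
    simp only [if_pos hu, if_neg hv']
    by_cases hvx : v = x
    · exact Or.inr hvx.symm
    · exact Or.inl ⟨fun h => hvx h.symm, Or.inr (Or.inl ⟨rfl, huv, hv'⟩)⟩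
  · rw [hv'] at huv
    simp only [if_neg hu, if_pos hv']
    by_cases hux : u = x
    · exact Or.inr hux
    · exact Or.inl ⟨hux, Or.inr (Or.inr ⟨rfl, huv, hu⟩)⟩
  · simp only [if_neg hu, if_neg hv']
    exact Or.inl ⟨huv.ne, Or.inl ⟨huv, hu, hv'⟩⟩

/-- Remove stutters from an or-eq chain. -/
lemma dedup_chain (R : V → V → Prop) :
    ∀ (l : List V) (hl : l ≠ []), l.IsChain (fun a b => R a b ∨ a = b) →
    ∃ (m : List V) (hm : m ≠ []), m.IsChain R ∧ m.head hm = l.head hl ∧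
      m.getLast hm = l.getLast hl ∧ ∀ v ∈ m, v ∈ l := by
  intro l
  induction l with
  | nil => simp
  | cons a t IH =>
    intro _ hc
    cases t with
    | nil => exact ⟨[a], by simp, by simp, rfl, rfl, by simp⟩
    | cons b t' =>
      obtain ⟨hab, ht⟩ := List.isChain_cons_cons.1 hc
      obtain ⟨m, hm, h1, h2, h3, h4⟩ := IH (by simp) ht
      rcases hab with hR | heq
      · refine ⟨a :: m, by simp, ?_, rfl, ?_, ?_⟩
        · rw [List.isChain_cons]
          refine ⟨?_, h1⟩
          intro c hcm
          rw [List.head?_eq_head hm] at hcm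
          obtain rfl : m.head hm = c := by simpa using hcm
          rw [h2]
          exact hR
        · rw [List.getLast_cons hm, h3, List.getLast_cons (l := b :: t') (by simp)]
        · intro v hv
          rcases List.mem_cons.1 hv with rfl | hv
          · exact List.mem_cons_self
          · exact List.mem_cons_of_mem _ (h4 v hv)
      · subst heq
        refine ⟨m, hm, h1, h2, ?_, fun v hv => List.mem_cons_of_mem _ (h4 v hv)⟩
        rw [h3]
        exact (List.getLast_cons (l := a :: t') (by simp)).symm

lemma contract_edge_mem {e : Sym2 V} (hxy : x ≠ y)
    (he : e ∈ (contract G x y).edgeSet) : y ∉ e := by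
  induction e using Sym2.ind with
  | _ a b =>
    rw [Sym2.mem_iff]
    rintro (rfl | rfl)
    · exact (contract_ne_y hxy he).1 rfl
    · exact (contract_ne_y hxy he).2 rfl

lemma contract_out_shape [DecidableEq V] {e : Sym2 V} (hxy : x ≠ y)
    (he : e ∈ (contract G x y).edgeSet) (hg : e ∉ G.edgeSet) :
    ∃ c, c ≠ x ∧ c ≠ y ∧ G.Adj y c ∧ e = s(x, c) ∧
      Sym2.map (fun v => if v = x then y else v) e = s(y, c) := by
  induction e using Sym2.ind with
  | _ a b =>
    have hne := he.1
    rcases he.2 with ⟨h1, _, _⟩ | ⟨h1, h2, h3⟩ | ⟨h1, h2, h3⟩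
    · exact absurd h1 (fun h => hg (G.mem_edgeSet.2 h))
    · subst h1
      refine ⟨b, fun h => hne h.symm, h3, h2, rfl, ?_⟩
      rw [Sym2.map_pair_eq, if_pos rfl, if_neg (fun h => hne h.symm)]
    · subst h1
      refine ⟨a, fun h => hne h, h3, h2.symm, Sym2.eq_swap, ?_⟩
      rw [Sym2.map_pair_eq, if_pos rfl, if_neg (fun h => hne h)]
      exact Sym2.eq_swap

lemma contract_ncard [Fintype V] [DecidableEq V] (hadj : G.Adj x y) :
    (contract G x y).edgeSet.ncard ≤ (G.edgeSet \ {s(x, y)}).ncard := by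
  classical
  set f : Sym2 V → Sym2 V :=
    fun e => if e ∈ G.edgeSet then e else Sym2.map (fun v => if v = x then y else v) e with hf
  have hfe : ∀ e, f e = if e ∈ G.edgeSet then e else Sym2.map (fun v => if v = x then y else v) e := fun e => rfl
  have hxy : x ≠ y := hadj.ne
  have hmaps : ∀ e ∈ (contract G x y).edgeSet, f e ∈ G.edgeSet \ {s(x, y)} := by
    intro e he
    by_cases hg : e ∈ G.edgeSet
    · rw [hfe, if_pos hg]
      refine ⟨hg, ?_⟩
      intro hmem
      rw [Set.mem_singleton_iff] at hmem
      exact contract_edge_mem hxy he (by rw [hmem]; simp)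
    · obtain ⟨c, hcx, hcy, hyc, _, hmap⟩ := contract_out_shape hxy he hg
      rw [hfe, if_neg hg, hmap]
      refine ⟨G.mem_edgeSet.2 hyc, ?_⟩
      rw [Set.mem_singleton_iff]
      intro hmem
      rcases Sym2.eq_iff.1 hmem with ⟨h1, _⟩ | ⟨_, h2⟩
      · exact hxy h1.symm
      · exact hcx h2
  have hyin : ∀ e ∈ (contract G x y).edgeSet, e ∉ G.edgeSet → y ∈ f e := by
    intro e he hg
    obtain ⟨c, _, _, _, _, hmap⟩ := contract_out_shape hxy he hg
    rw [hfe, if_neg hg, hmap]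
    simp
  have hinj : Set.InjOn f (contract G x y).edgeSet := by
    intro e1 he1 e2 he2 heq
    by_cases hg1 : e1 ∈ G.edgeSet <;> by_cases hg2 : e2 ∈ G.edgeSet
    · rwa [hfe, hfe, if_pos hg1, if_pos hg2] at heq
    · exfalso
      have hy2 : y ∈ f e2 := hyin e2 he2 hg2
      have hy1 : y ∉ f e1 := by
        rw [hfe, if_pos hg1]; exact contract_edge_mem hxy he1
      rw [heq] at hy1; exact hy1 hy2
    · exfalso
      have hy1 : y ∈ f e1 := hyin e1 he1 hg1
      have hy2 : y ∉ f e2 := by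
        rw [hfe, if_pos hg2]; exact contract_edge_mem hxy he2
      rw [← heq] at hy2; exact hy2 hy1
    · obtain ⟨c1, hc1x, hc1y, _, he1s, hm1⟩ := contract_out_shape hxy he1 hg1
      obtain ⟨c2, hc2x, hc2y, _, he2s, hm2⟩ := contract_out_shape hxy he2 hg2
      rw [hfe, hfe, if_neg hg1, if_neg hg2, hm1, hm2] at heq
      rcases Sym2.eq_iff.1 heq with ⟨_, h2⟩ | ⟨h1, _⟩
      · rw [he1s, he2s, h2]
      · exact absurd h1.symm hc2y
  exact Set.ncard_le_ncard_of_injOn f hmaps hinj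

lemma y_not_mem_strict [DecidableEq V] (hxy : x ≠ y) {A' B' : Set V} (hyA : y ∉ A')
    {m : List V} (hs : Strict (contract G x y) A' B' m) : y ∉ m := by
  intro hym
  obtain ⟨m₁, m₂, hmeq⟩ := List.append_of_mem hym
  cases m₂ with
  | cons b t =>
    have h1 : (m₁ ++ y :: b :: t).IsChain (contract G x y).Adj := hmeq ▸ hs.chain
    have h2 := (List.isChain_split.1 h1).2
    exact (contract_ne_y hxy (List.isChain_cons_cons.1 h2).1).1 rfl
  | nil =>
    rcases List.eq_nil_or_concat m₁ with rfl | ⟨p, a, hpa⟩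
    · have h1 : m.head hs.ne = y := head_congr hmeq hs.ne (by simp)
      exact hyA (h1 ▸ hs.headA)
    · rw [List.concat_eq_append] at hpa
      have h1 : ((p ++ [a]) ++ y :: []).IsChain (contract G x y).Adj := by
        rw [← hpa, ← hmeq]; exact hs.chain
      have hb := (List.isChain_append.1 h1).2.2 a (by rw [List.getLast?_concat]; rfl)
        y (by rfl)
      exact (contract_ne_y hxy hb).2 rfl

lemma contract_sep_pull [DecidableEq V] {A B A' B' S' : Finset V}
    (hA' : ∀ v, v ∈ A' ↔ (v ∈ A ∧ v ≠ y) ∨ (v = x ∧ y ∈ A))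
    (hB' : ∀ v, v ∈ B' ↔ (v ∈ B ∧ v ≠ y) ∨ (v = x ∧ y ∈ B))
    (hS' : Sep (contract G x y) ↑A' ↑B' S')
    (l : List V) (hl : l ≠ []) (hc : l.IsChain G.Adj) (ha : l.head hl ∈ (A : Set V))
    (hb : l.getLast hl ∈ (B : Set V)) :
    ∃ s ∈ S', s ∈ l ∨ (s = x ∧ y ∈ l) := by
  set φ : V → V := fun v => if v = y then x else v with hφ
  have hmne : l.map φ ≠ [] := by simpa
  have hchain := contract_chain_map (G := G) (x := x) (y := y) hc
  obtain ⟨m, hm, hcm, hh, hgl, hsub⟩ := dedup_chain _ _ hmne hchain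
  have hφA : ∀ v, v ∈ A → φ v ∈ A' := by
    intro v hv
    rw [hφ]
    by_cases hvy : v = y
    · simp only [if_pos hvy]
      exact (hA' x).2 (Or.inr ⟨rfl, hvy ▸ hv⟩)
    · simp only [if_neg hvy]
      exact (hA' v).2 (Or.inl ⟨hv, hvy⟩)
  have hφB : ∀ v, v ∈ B → φ v ∈ B' := by
    intro v hv
    rw [hφ]
    by_cases hvy : v = y
    · simp only [if_pos hvy]
      exact (hB' x).2 (Or.inr ⟨rfl, hvy ▸ hv⟩)
    · simp only [if_neg hvy]
      exact (hB' v).2 (Or.inl ⟨hv, hvy⟩)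
  obtain ⟨s, hsS, hsm⟩ := hS' m hm hcm
    (by rw [hh, List.head_map]; exact hφA _ ha)
    (by rw [hgl, List.getLast_map]; exact hφB _ hb)
  obtain ⟨v, hvl, hveq⟩ := List.mem_map.1 (hsub s hsm)
  by_cases hvy : v = y
  · refine ⟨s, hsS, Or.inr ⟨?_, hvy ▸ hvl⟩⟩
    rw [← hveq, hφ]; simp [hvy]
  · refine ⟨s, hsS, Or.inl ?_⟩
    have : φ v = v := by rw [hφ]; simp [hvy]
    rw [← hveq, this]
    exact hvl

lemma assemble (G : SimpleGraph V) (A B : Set V) (m₁ mid m₂ : List V) (hmid : mid ≠ [])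
    (hc₁ : m₁.IsChain G.Adj) (hcm : mid.IsChain G.Adj) (hc₂ : m₂.IsChain G.Adj)
    (hb₁ : ∀ a ∈ m₁.getLast?, G.Adj a (mid.head hmid))
    (hb₂ : ∀ b ∈ m₂.head?, G.Adj (mid.getLast hmid) b)
    (hn₁ : m₁.Nodup) (hnm : mid.Nodup) (hn₂ : m₂.Nodup)
    (hd12 : ∀ v ∈ m₁, v ∉ m₂) (hdm1 : ∀ v ∈ mid, v ∉ m₁) (hdm2 : ∀ v ∈ mid, v ∉ m₂)
    (hA : ∀ h : m₁ ≠ [], m₁.head h ∈ A) (hA' : m₁ = [] → mid.head hmid ∈ A)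
    (hB : ∀ h : m₂ ≠ [], m₂.getLast h ∈ B) (hB' : m₂ = [] → mid.getLast hmid ∈ B) :
    ∃ hL : (m₁ ++ mid ++ m₂) ≠ [], (m₁ ++ mid ++ m₂).IsChain G.Adj ∧
      (m₁ ++ mid ++ m₂).Nodup ∧ (m₁ ++ mid ++ m₂).head hL ∈ A ∧
      (m₁ ++ mid ++ m₂).getLast hL ∈ B := by
  have hL : (m₁ ++ mid ++ m₂) ≠ [] := by simp [hmid]
  refine ⟨hL, ?_, ?_, ?_, ?_⟩
  · rw [List.append_assoc]
    refine List.isChain_append.2 ⟨hc₁, ?_, ?_⟩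
    · refine List.isChain_append.2 ⟨hcm, hc₂, ?_⟩
      intro c hc b hb
      rw [List.getLast?_eq_getLast hmid] at hc
      obtain rfl : mid.getLast hmid = c := by simpa using hc
      exact hb₂ b hb
    · intro a ha c hc
      rw [List.head?_append, List.head?_eq_head (l := mid) hmid] at hc
      obtain rfl : mid.head hmid = c := by simpa using hc
      exact hb₁ a ha
  · refine List.nodup_append.2 ⟨List.nodup_append.2 ⟨hn₁, hnm, ?_⟩, hn₂, ?_⟩
    · intro v hv1 _ hvm rfl
      exact hdm1 v hvm hv1
    · intro v hv _ hv2 rfl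
      rcases List.mem_append.1 hv with h | h
      · exact hd12 v h hv2
      · exact hdm2 v h hv2
  · rcases List.eq_nil_or_concat m₁ with h1 | ⟨p, a, hpa⟩
    · subst h1
      have e : ((([] : List V) ++ mid ++ m₂)).head hL = mid.head hmid := by
        show (mid ++ m₂).head _ = _
        rw [List.head_append]
        simp [List.isEmpty_iff, hmid]
      rw [e]; exact hA' rfl
    · have hm1ne : m₁ ≠ [] := by rw [hpa]; simp
      have e : (m₁ ++ mid ++ m₂).head hL = m₁.head hm1ne := by
        refine (head_congr (List.append_assoc m₁ mid m₂) hL (by simp [hm1ne])).trans ?_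
        rw [List.head_append]
        simp [List.isEmpty_iff, hm1ne]
      rw [e]; exact hA hm1ne
  · rcases List.eq_nil_or_concat m₂ with h2 | ⟨p, a, hpa⟩
    · subst h2
      have e : ((m₁ ++ mid ++ ([] : List V))).getLast hL = mid.getLast hmid := by
        refine (getLast_congr (List.append_nil _) hL (by simp [hmid])).trans ?_
        rw [List.getLast_append]
        simp [List.isEmpty_iff, hmid]
      rw [e]; exact hB' rfl
    · have hm2ne : m₂ ≠ [] := by rw [hpa]; simp
      have e : (m₁ ++ mid ++ m₂).getLast hL = m₂.getLast hm2ne := by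
        rw [List.getLast_append]
        simp [List.isEmpty_iff, hm2ne]
      rw [e]; exact hB hm2ne

lemma lift_path [DecidableEq V] (hadj : G.Adj x y) {A B A' B' : Finset V}
    (hA' : ∀ v, v ∈ A' ↔ (v ∈ A ∧ v ≠ y) ∨ (v = x ∧ y ∈ A))
    (hB' : ∀ v, v ∈ B' ↔ (v ∈ B ∧ v ≠ y) ∨ (v = x ∧ y ∈ B))
    (m : List V) (hs : Strict (contract G x y) ↑A' ↑B' m) :
    ∃ L : List V, (∃ hL : L ≠ [], L.IsChain G.Adj ∧ L.Nodup ∧ L.head hL ∈ (A : Set V) ∧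
      L.getLast hL ∈ (B : Set V)) ∧ (∀ v ∈ L, v ∈ m ∨ v = x ∨ v = y) ∧
      (x ∉ m → L = m) := by
  have hxy : x ≠ y := hadj.ne
  have hyA' : y ∉ (A' : Set V) := by
    rw [Finset.mem_coe, hA']
    rintro (⟨-, h⟩ | ⟨h, -⟩)
    · exact h rfl
    · exact hxy h.symm
  have hym : y ∉ m := y_not_mem_strict hxy hyA' hs
  by_cases hxm : x ∈ m
  case neg =>
    refine ⟨m, ⟨hs.ne, ?_, hs.nodup, ?_, ?_⟩, fun v hv => Or.inl hv, fun _ => rfl⟩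
    · exact chain'_contract_to_G hxy m hs.chain (fun v hv h => hxm (h ▸ hv))
    · have h1 := hs.headA
      rw [Finset.mem_coe, hA'] at h1
      rcases h1 with ⟨h, _⟩ | ⟨h, _⟩
      · exact h
      · exact absurd (h ▸ List.head_mem hs.ne) hxm
    · have h1 := hs.lastB
      rw [Finset.mem_coe, hB'] at h1
      rcases h1 with ⟨h, _⟩ | ⟨h, _⟩
      · exact h
      · exact absurd (h ▸ List.getLast_mem hs.ne) hxm
  case pos =>
    obtain ⟨m₁, m₂, hmeq⟩ := List.append_of_mem hxm
    have hnd : (m₁ ++ x :: m₂).Nodup := hmeq ▸ hs.nodup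
    have hxm₁ : x ∉ m₁ := fun h => (List.nodup_append.1 hnd).2.2 _ h _ List.mem_cons_self rfl
    have hxm₂ : x ∉ m₂ := fun h => (List.nodup_cons.1 (List.nodup_append.1 hnd).2.1).1 h
    have hym₁ : y ∉ m₁ := fun h => hym (hmeq ▸ List.mem_append_left _ h)
    have hym₂ : y ∉ m₂ :=
      fun h => hym (hmeq ▸ List.mem_append_right _ (List.mem_cons_of_mem _ h))
    have hchain : (m₁ ++ x :: m₂).IsChain (contract G x y).Adj := hmeq ▸ hs.chain
    have hgc₁ : (m₁ ++ [x]).IsChain (contract G x y).Adj := (List.isChain_split.1 hchain).1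
    have hgc₂ : (x :: m₂).IsChain (contract G x y).Adj := (List.isChain_split.1 hchain).2
    have hc₁ : m₁.IsChain G.Adj :=
      chain'_contract_to_G hxy m₁ (List.isChain_append.1 hgc₁).1 (fun v hv h => hxm₁ (h ▸ hv))
    have hc₂ : m₂.IsChain G.Adj :=
      chain'_contract_to_G hxy m₂ (List.isChain_cons.1 hgc₂).2 (fun v hv h => hxm₂ (h ▸ hv))
    have hbL : ∀ a ∈ m₁.getLast?, G.Adj a x ∨ G.Adj a y := by
      intro a ha
      have ham : a ∈ m₁ := List.mem_of_mem_getLast? ha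
      have h1 := (List.isChain_append.1 hgc₁).2.2 a ha x rfl
      exact contract_adj_left h1 (fun h => hxm₁ (h ▸ ham))
    have hbR : ∀ b ∈ m₂.head?, G.Adj x b ∨ G.Adj y b := by
      intro b hb
      have hbm : b ∈ m₂ := List.mem_of_mem_head? hb
      have h1 := (List.isChain_cons.1 hgc₂).1 b hb
      exact contract_adj_right h1 (fun h => hxm₂ (h ▸ hbm))
    have hH : ∀ h : m₁ ≠ [], m₁.head h ∈ A := by
      intro h
      have e : m.head hs.ne = m₁.head h := by
        refine (head_congr hmeq hs.ne (by simp)).trans ?_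
        rw [List.head_append]
        simp [List.isEmpty_iff, h]
      have h1 := hs.headA
      rw [Finset.mem_coe, hA', e] at h1
      rcases h1 with ⟨ha, _⟩ | ⟨hx1, _⟩
      · exact ha
      · exact absurd (hx1 ▸ List.head_mem h) hxm₁
    have hHnil : m₁ = [] → x ∈ A ∨ y ∈ A := by
      intro h
      subst h
      have e : m.head hs.ne = x := head_congr hmeq hs.ne (by simp)
      have h1 := hs.headA
      rw [Finset.mem_coe, hA', e] at h1
      rcases h1 with ⟨ha, _⟩ | ⟨_, hy1⟩
      · exact Or.inl ha
      · exact Or.inr hy1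
    have hT : ∀ h : m₂ ≠ [], m₂.getLast h ∈ B := by
      intro h
      have e : m.getLast hs.ne = m₂.getLast h := by
        refine (getLast_congr hmeq hs.ne (by simp)).trans ?_
        exact (getLast_append_cons m₁ x m₂).trans (List.getLast_cons h)
      have h1 := hs.lastB
      rw [Finset.mem_coe, hB', e] at h1
      rcases h1 with ⟨hb, _⟩ | ⟨hx1, _⟩
      · exact hb
      · exact absurd (hx1 ▸ List.getLast_mem h) hxm₂
    have hTnil : m₂ = [] → x ∈ B ∨ y ∈ B := by
      intro h
      subst h
      have e : m.getLast hs.ne = x := by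
        refine (getLast_congr hmeq hs.ne (by simp)).trans ?_
        exact List.getLast_concat
      have h1 := hs.lastB
      rw [Finset.mem_coe, hB', e] at h1
      rcases h1 with ⟨hb, _⟩ | ⟨_, hy1⟩
      · exact Or.inl hb
      · exact Or.inr hy1
    obtain ⟨c₁, hc₁xy, hc₁A, hc₁adj⟩ :
        ∃ c₁, (c₁ = x ∨ c₁ = y) ∧ (m₁ = [] → c₁ ∈ A) ∧
          (∀ h : m₁ ≠ [], G.Adj (m₁.getLast h) c₁) := by
      rcases List.eq_nil_or_concat m₁ with h1 | ⟨p, a, hpa⟩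
      · rcases hHnil h1 with hxa | hya
        · exact ⟨x, Or.inl rfl, fun _ => hxa, fun h => absurd h1 h⟩
        · exact ⟨y, Or.inr rfl, fun _ => hya, fun h => absurd h1 h⟩
      · rw [List.concat_eq_append] at hpa
        have hne : m₁ ≠ [] := by rw [hpa]; simp
        rcases hbL (m₁.getLast hne) (by rw [List.getLast?_eq_getLast hne]; rfl)
          with hax | hay
        · exact ⟨x, Or.inl rfl, fun h => absurd h hne, fun _ => hax⟩
        · exact ⟨y, Or.inr rfl, fun h => absurd h hne, fun _ => hay⟩
    obtain ⟨c₂, hc₂xy, hc₂B, hc₂adj⟩ :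
        ∃ c₂, (c₂ = x ∨ c₂ = y) ∧ (m₂ = [] → c₂ ∈ B) ∧
          (∀ h : m₂ ≠ [], G.Adj c₂ (m₂.head h)) := by
      cases m₂ with
      | nil =>
        rcases hTnil rfl with hxb | hyb
        · exact ⟨x, Or.inl rfl, fun _ => hxb, fun h => absurd rfl h⟩
        · exact ⟨y, Or.inr rfl, fun _ => hyb, fun h => absurd rfl h⟩
      | cons b t =>
        rcases hbR b rfl with hxb | hyb
        · exact ⟨x, Or.inl rfl, fun h => absurd h (by simp), fun _ => hxb⟩
        · exact ⟨y, Or.inr rfl, fun h => absurd h (by simp), fun _ => hyb⟩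
    by_cases hcc : c₁ = c₂
    case pos =>
      -- mid = [c₁]
      obtain ⟨hL, hch, hnod, hhA, hlB⟩ :=
        assemble G (A : Set V) (B : Set V) m₁ [c₁] m₂ (by simp)
          hc₁ (by simp) hc₂
          (by intro a ha
              simp only [List.head_cons]
              rcases List.eq_nil_or_concat m₁ with h1 | ⟨p, q, hpq⟩
              · rw [h1] at ha; simp at ha
              · rw [List.concat_eq_append] at hpq
                have hne : m₁ ≠ [] := by rw [hpq]; simp
                rw [List.getLast?_eq_getLast hne] at ha
                obtain rfl : m₁.getLast hne = a := by simpa using ha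
                exact hc₁adj hne)
          (by intro b hb
              simp only [List.getLast_singleton]
              cases m₂ with
              | nil => simp at hb
              | cons c t =>
                obtain rfl : c = b := by simpa using hb
                rw [hcc]
                exact hc₂adj (by simp))
          ((List.nodup_append.1 hnd).1) (by simp)
          ((List.nodup_cons.1 (List.nodup_append.1 hnd).2.1).2)
          (fun v hv hv2 => (List.nodup_append.1 hnd).2.2 _ hv _ (List.mem_cons_of_mem _ hv2) rfl)
          (by intro v hv
              obtain rfl : v = c₁ := by simpa using hv
              rcases hc₁xy with rfl | rfl
              · exact hxm₁
              · exact hym₁)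
          (by intro v hv
              obtain rfl : v = c₁ := by simpa using hv
              rcases hc₁xy with rfl | rfl
              · exact hxm₂
              · exact hym₂)
          hH (fun h => by simpa using hc₁A h)
          hT (fun h => by simp only [List.getLast_singleton]; rw [hcc]; exact hc₂B h)
      refine ⟨m₁ ++ [c₁] ++ m₂, ⟨hL, hch, hnod, hhA, hlB⟩, ?_, fun h => absurd hxm h⟩
      intro v hv
      rcases List.mem_append.1 hv with hv | hv
      · rcases List.mem_append.1 hv with hv | hv
        · exact Or.inl (hmeq ▸ List.mem_append_left _ hv)
        · obtain rfl : v = c₁ := by simpa using hv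
          exact Or.inr (by rcases hc₁xy with rfl | rfl <;> simp)
      · exact Or.inl (hmeq ▸ List.mem_append_right _ (List.mem_cons_of_mem _ hv))
    case neg =>
      have hmidadj : G.Adj c₁ c₂ := by
        rcases hc₁xy with rfl | rfl <;> rcases hc₂xy with rfl | rfl
        · exact absurd rfl hcc
        · exact hadj
        · exact hadj.symm
        · exact absurd rfl hcc
      obtain ⟨hL, hch, hnod, hhA, hlB⟩ :=
        assemble G (A : Set V) (B : Set V) m₁ [c₁, c₂] m₂ (by simp)
          hc₁ (by simp [List.isChain_cons_cons, hmidadj]) hc₂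
          (by intro a ha
              simp only [List.head_cons]
              rcases List.eq_nil_or_concat m₁ with h1 | ⟨p, q, hpq⟩
              · rw [h1] at ha; simp at ha
              · rw [List.concat_eq_append] at hpq
                have hne : m₁ ≠ [] := by rw [hpq]; simp
                rw [List.getLast?_eq_getLast hne] at ha
                obtain rfl : m₁.getLast hne = a := by simpa using ha
                exact hc₁adj hne)
          (by intro b hb
              have e : ([c₁, c₂] : List V).getLast (by simp) = c₂ := by simp
              rw [e]
              cases m₂ with
              | nil => simp at hb
              | cons c t =>
                obtain rfl : c = b := by simpa using hb
                exact hc₂adj (by simp))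
          ((List.nodup_append.1 hnd).1) (by simp [hcc])
          ((List.nodup_cons.1 (List.nodup_append.1 hnd).2.1).2)
          (fun v hv hv2 => (List.nodup_append.1 hnd).2.2 _ hv _ (List.mem_cons_of_mem _ hv2) rfl)
          (by intro v hv
              rcases List.mem_cons.1 hv with rfl | hv
              · rcases hc₁xy with rfl | rfl
                · exact hxm₁
                · exact hym₁
              · obtain rfl : v = c₂ := by simpa using hv
                rcases hc₂xy with rfl | rfl
                · exact hxm₁
                · exact hym₁)
          (by intro v hv
              rcases List.mem_cons.1 hv with rfl | hv
              · rcases hc₁xy with rfl | rfl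
                · exact hxm₂
                · exact hym₂
              · obtain rfl : v = c₂ := by simpa using hv
                rcases hc₂xy with rfl | rfl
                · exact hxm₂
                · exact hym₂)
          hH (fun h => by simpa using hc₁A h)
          hT (fun h => by
            have e : ([c₁, c₂] : List V).getLast (by simp) = c₂ := by simp
            rw [e]; exact hc₂B h)
      refine ⟨m₁ ++ [c₁, c₂] ++ m₂, ⟨hL, hch, hnod, hhA, hlB⟩, ?_, fun h => absurd hxm h⟩
      intro v hv
      rcases List.mem_append.1 hv with hv | hv
      · rcases List.mem_append.1 hv with hv | hv
        · exact Or.inl (hmeq ▸ List.mem_append_left _ hv)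
        · rcases List.mem_cons.1 hv with rfl | hv
          · exact Or.inr (by rcases hc₁xy with rfl | rfl <;> simp)
          · obtain rfl : v = c₂ := by simpa using hv
            exact Or.inr (by rcases hc₂xy with rfl | rfl <;> simp)
      · exact Or.inl (hmeq ▸ List.mem_append_right _ (List.mem_cons_of_mem _ hv))

lemma menger_base [DecidableEq V] (G : SimpleGraph V) (hE : ∀ a b, ¬G.Adj a b)
    (A B : Finset V) (k : ℕ)
    (hsep : ∀ S : Finset V, Sep G ↑A ↑B S → k ≤ S.card) :
    ∃ f : Fin k → List V, (∀ i, Strict G ↑A ↑B (f i)) ∧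
      ∀ i j, i ≠ j → ∀ w ∈ f i, w ∉ f j := by
  have hsepAB : Sep G ↑A ↑B (A ∩ B) := by
    intro l hl hc ha hb
    cases l with
    | nil => exact absurd rfl hl
    | cons a t =>
      cases t with
      | nil =>
        refine ⟨a, Finset.mem_inter.2 ⟨Finset.mem_coe.1 ha, ?_⟩, by simp⟩
        simpa using hb
      | cons b t' => exact absurd (List.isChain_cons_cons.1 hc).1 (hE a b)
  have hk := hsep _ hsepAB
  have hlen : k ≤ (A ∩ B).toList.length := by rw [Finset.length_toList]; exact hk
  refine ⟨fun i => [(A ∩ B).toList.get ⟨i, lt_of_lt_of_le i.2 hlen⟩], ?_, ?_⟩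
  · intro i
    have hmem : (A ∩ B).toList.get ⟨i, lt_of_lt_of_le i.2 hlen⟩ ∈ A ∩ B :=
      Finset.mem_toList.1 (List.get_mem _ _)
    refine ⟨by simp, by simp, by simp, ?_, ?_, ?_, ?_⟩
    · simpa using Finset.mem_coe.2 (Finset.mem_inter.1 hmem).1
    · simpa using Finset.mem_coe.2 (Finset.mem_inter.1 hmem).2
    · intro w hw _; simpa using hw
    · intro w hw _; simpa using hw
  · intro i j hij w hwi hwj
    simp only [List.mem_singleton] at hwi hwj
    have hinj := List.nodup_iff_injective_get.1 (Finset.nodup_toList (A ∩ B))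
    have := hinj (hwi ▸ hwj : (A ∩ B).toList.get _ = (A ∩ B).toList.get _)
    rw [Fin.mk.injEq] at this
    exact hij (Fin.ext this)

theorem menger_core [Fintype V] [DecidableEq V] :
    ∀ (n : ℕ) (G : SimpleGraph V), G.edgeSet.ncard ≤ n →
    ∀ (A B : Finset V) (k : ℕ),
    (∀ S : Finset V, Sep G ↑A ↑B S → k ≤ S.card) →
    ∃ f : Fin k → List V, (∀ i, Strict G ↑A ↑B (f i)) ∧
      ∀ i j, i ≠ j → ∀ w ∈ f i, w ∉ f j := by
  intro n
  induction n with
  | zero =>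
    intro G hn A B k hsep
    refine menger_base G ?_ A B k hsep
    intro a b hab
    have : G.edgeSet = ∅ := (Set.ncard_eq_zero (Set.toFinite _)).1 (Nat.le_zero.1 hn)
    exact Set.eq_empty_iff_forall_notMem.1 this _ (G.mem_edgeSet.2 hab)
  | succ n IH =>
    intro G hn A B k hsep
    by_cases hE : ∃ x y, G.Adj x y
    case neg =>
      push_neg at hE
      exact menger_base G hE A B k hsep
    case pos =>
    obtain ⟨x, y, hadj⟩ := hE
    have hxy : x ≠ y := hadj.ne
    have hGedge : s(x, y) ∈ G.edgeSet := G.mem_edgeSet.2 hadj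
    have hfin : G.edgeSet.Finite := Set.toFinite _
    have hpos : 1 ≤ G.edgeSet.ncard := (Set.ncard_pos hfin).2 ⟨_, hGedge⟩
    have hdiffcard : (G.edgeSet \ {s(x, y)}).ncard ≤ n := by
      rw [Set.ncard_diff_singleton_of_mem hGedge]
      omega
    have hdel : (G.deleteEdges {s(x, y)}).edgeSet.ncard ≤ n := by
      rw [SimpleGraph.edgeSet_deleteEdges]
      exact hdiffcard
    classical
    set A' : Finset V := (A.erase y) ∪ (if y ∈ A then {x} else ∅) with hA'def
    set B' : Finset V := (B.erase y) ∪ (if y ∈ B then {x} else ∅) with hB'def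
    have hA'mem : ∀ v, v ∈ A' ↔ (v ∈ A ∧ v ≠ y) ∨ (v = x ∧ y ∈ A) := by
      intro v
      rw [hA'def]
      simp only [Finset.mem_union, Finset.mem_erase]
      by_cases hyA : y ∈ A
      · simp only [if_pos hyA, Finset.mem_singleton]
        tauto
      · simp only [if_neg hyA, Finset.notMem_empty]
        tauto
    have hB'mem : ∀ v, v ∈ B' ↔ (v ∈ B ∧ v ≠ y) ∨ (v = x ∧ y ∈ B) := by
      intro v
      rw [hB'def]
      simp only [Finset.mem_union, Finset.mem_erase]
      by_cases hyB : y ∈ B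
      · simp only [if_pos hyB, Finset.mem_singleton]
        tauto
      · simp only [if_neg hyB, Finset.notMem_empty]
        tauto
    have hyA' : y ∉ (↑A' : Set V) := by
      rw [Finset.mem_coe, hA'mem]
      rintro (⟨-, h⟩ | ⟨h, -⟩)
      · exact h rfl
      · exact hxy h.symm
    have hcont_card : (contract G x y).edgeSet.ncard ≤ n :=
      le_trans (contract_ncard hadj) hdiffcard
    by_cases hcase : ∀ S' : Finset V, Sep (contract G x y) ↑A' ↑B' S' → k ≤ S'.card
    case pos =>
      obtain ⟨f, hf, hd⟩ := IH (contract G x y) hcont_card A' B' k hcase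
      have hlift := fun i => lift_path hadj hA'mem hB'mem (f i) (hf i)
      choose L hLprops hLsub hLeq using hlift
      have hdisj : ∀ i j, i ≠ j → ∀ w ∈ L i, w ∉ L j := by
        intro i j hij w hwi hwj
        by_cases hxi : x ∈ f i
        · by_cases hxj : x ∈ f j
          · exact hd i j hij x hxi hxj
          · rw [hLeq j hxj] at hwj
            rcases hLsub i w hwi with h | rfl | rfl
            · exact hd i j hij w h hwj
            · exact hxj hwj
            · exact (y_not_mem_strict hxy hyA' (hf j)) hwj
        · rw [hLeq i hxi] at hwi
          by_cases hxj : x ∈ f j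
          · rcases hLsub j w hwj with h | rfl | rfl
            · exact hd i j hij w hwi h
            · exact hxi hwi
            · exact (y_not_mem_strict hxy hyA' (hf i)) hwi
          · rw [hLeq j hxj] at hwj
            exact hd i j hij w hwi hwj
      exact finish G ↑A ↑B k L (fun i => hLprops i) hdisj
    case neg =>
      push_neg at hcase
      obtain ⟨S', hS'sep, hS'card⟩ := hcase
      have hxS' : x ∈ S' := by
        by_contra hxS'
        have hsepS' : Sep G ↑A ↑B S' := by
          intro l hl hc ha hb
          obtain ⟨s, hsS, h2⟩ := contract_sep_pull hA'mem hB'mem hS'sep l hl hc ha hb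
          rcases h2 with hsl | ⟨hsx, _⟩
          · exact ⟨s, hsS, hsl⟩
          · exact absurd (hsx ▸ hsS) hxS'
        exact absurd (hsep S' hsepS') (by omega)
      set S : Finset V := S' ∪ {y} with hSdef
      have hSsep : Sep G ↑A ↑B S := by
        intro l hl hc ha hb
        obtain ⟨s, hsS, h2⟩ := contract_sep_pull hA'mem hB'mem hS'sep l hl hc ha hb
        rcases h2 with hsl | ⟨_, hyl⟩
        · exact ⟨s, Finset.mem_union_left _ hsS, hsl⟩
        · exact ⟨y, Finset.mem_union_right _ (Finset.mem_singleton_self y), hyl⟩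
      have hSk := hsep S hSsep
      have hScard : S.card = k := by
        have h1 : S.card ≤ S'.card + 1 := le_trans (Finset.card_union_le _ _) (by simp)
        omega
      have hxS : x ∈ S := Finset.mem_union_left _ hxS'
      have hyS : y ∈ S := Finset.mem_union_right _ (Finset.mem_singleton_self y)
      have hsep1 : ∀ T : Finset V, Sep (G.deleteEdges {s(x, y)}) ↑A ↑S T → k ≤ T.card :=
        fun T hT => hsep T (sep_del_AtoS G x y ↑A ↑B S T hSsep hxS hyS hT)
      have hsep2 : ∀ T : Finset V, Sep (G.deleteEdges {s(x, y)}) ↑S ↑B T → k ≤ T.card :=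
        fun T hT => hsep T (sep_del_StoB G x y ↑A ↑B S T hSsep hxS hyS hT)
      obtain ⟨P, hP, hPd⟩ := IH (G.deleteEdges {s(x, y)}) hdel A S k hsep1
      obtain ⟨Q, hQ, hQd⟩ := IH (G.deleteEdges {s(x, y)}) hdel S B k hsep2
      set Gg : Fin k → {v // v ∈ S} := fun j => ⟨(Q j).head (hQ j).ne,
        Finset.mem_coe.1 (hQ j).headA⟩ with hGgdef
      have hGinj : Function.Injective Gg := by
        intro j1 j2 he
        by_contra hne
        refine hQd j1 j2 hne ((Q j1).head (hQ j1).ne) (List.head_mem _) ?_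
        have h2 : (Q j1).head (hQ j1).ne = (Q j2).head (hQ j2).ne := congrArg Subtype.val he
        rw [h2]
        exact List.head_mem _
      have hGbij : Function.Bijective Gg :=
        (Fintype.bijective_iff_injective_and_card Gg).2
          ⟨hGinj, by rw [Fintype.card_fin, Fintype.card_coe, hScard]⟩
      set F : Fin k → {v // v ∈ S} := fun i => ⟨(P i).getLast (hP i).ne,
        Finset.mem_coe.1 (hP i).lastB⟩ with hFdef
      set σ : Fin k → Fin k := fun i => (Equiv.ofBijective Gg hGbij).symm (F i) with hσdef
      have hFG : ∀ i, Gg (σ i) = F i := fun i =>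
        (Equiv.ofBijective Gg hGbij).apply_symm_apply (F i)
      have hσinj : Function.Injective σ := by
        intro i1 i2 he
        have hFeq : F i1 = F i2 := by rw [← hFG i1, ← hFG i2, he]
        by_contra hne
        refine hPd i1 i2 hne ((P i1).getLast (hP i1).ne) (List.getLast_mem _) ?_
        have h2 : (P i1).getLast (hP i1).ne = (P i2).getLast (hP i2).ne :=
          congrArg Subtype.val hFeq
        rw [h2]
        exact List.getLast_mem _
      have hmatch : ∀ i, ((Q ∘ σ) i).head (hQ (σ i)).ne = (P i).getLast (hP i).ne :=
        fun i => congrArg Subtype.val (hFG i)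
      have hSsep' : Sep (G.deleteEdges {s(x, y)}) ↑A ↑B S :=
        sep_mono (SimpleGraph.deleteEdges_le _) hSsep
      obtain ⟨f, hf, hd⟩ := glue (G.deleteEdges {s(x, y)}) ↑A ↑B S hSsep' k P (Q ∘ σ)
        hP (fun i => hQ (σ i)) hPd
        (fun i j hij => hQd (σ i) (σ j) (fun h => hij (hσinj h)))
        hmatch
      exact ⟨f, fun i => strict_mono' (SimpleGraph.deleteEdges_le _) (hf i), hd⟩

lemma count_side [Fintype V] [DecidableEq V] (G : SimpleGraph V) (A₁ A₂ B U S : Finset V)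
    (n : ℕ) (u v : Fin n → V) (p : ∀ j, G.Walk (u j) (v j))
    (hmemA : ∀ j, u j ∈ A₁) (hmemB : ∀ j, v j ∈ B)
    (h2 : ∀ j, ∀ w ∈ (p j).support, w ∉ A₂)
    (h3 : ∀ j k, j ≠ k → ∀ w, w ∈ (p j).support → w ∈ (p k).support → w ∈ A₁)
    (h4 : ∀ a ∈ A₁, (Finset.univ.filter fun j => a ∈ (p j).support).card = 2)
    (hU : A₁ ⊆ U) (hSsep : Sep G ↑U ↑B S) :
    n ≤ 2 * (S.filter (· ∈ A₁)).card + (S.filter (fun s => s ∉ A₁ ∧ s ∉ A₂)).card := by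
  have hhit : ∀ j, ∃ s ∈ S, s ∈ (p j).support := by
    intro j
    refine hSsep (p j).support (Walk.support_ne_nil _) (Walk.isChain_adj_support _) ?_ ?_
    · have e : (p j).support.head (Walk.support_ne_nil _) = u j := by
        refine (head_congr (Walk.support_eq_cons (p j)) _ (by simp)).trans ?_
        exact List.head_cons
      rw [e]
      exact Finset.mem_coe.2 (hU (hmemA j))
    · rw [Walk.getLast_support]
      exact Finset.mem_coe.2 (hmemB j)
  choose F hFS hFmem using hhit
  have hcount : n = ∑ s ∈ S, (Finset.univ.filter fun j => F j = s).card := by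
    have := Finset.card_eq_sum_card_fiberwise (f := F) (s := Finset.univ) (t := S)
      (fun j _ => hFS j)
    simpa using this
  have hbound : ∀ s ∈ S, (Finset.univ.filter fun j => F j = s).card ≤
      (if s ∈ A₁ then 2 else if s ∈ A₂ then 0 else 1) := by
    intro s _
    by_cases hs1 : s ∈ A₁
    · rw [if_pos hs1, ← h4 s hs1]
      refine Finset.card_le_card ?_
      intro j hj
      rw [Finset.mem_filter] at hj ⊢
      exact ⟨hj.1, hj.2 ▸ hFmem j⟩
    · rw [if_neg hs1]
      by_cases hs2 : s ∈ A₂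
      · rw [if_pos hs2]
        have : (Finset.univ.filter fun j => F j = s) = ∅ := by
          rw [Finset.filter_eq_empty_iff]
          intro j _ hFj
          exact h2 j s (hFj ▸ hFmem j) hs2
        rw [this]
        simp
      · rw [if_neg hs2]
        rw [Finset.card_le_one]
        intro j1 hj1 j2 hj2
        rw [Finset.mem_filter] at hj1 hj2
        by_contra hne
        exact hs1 (h3 j1 j2 hne s (hj1.2 ▸ hFmem j1) (hj2.2 ▸ hFmem j2))
  have hsum : ∑ s ∈ S, (Finset.univ.filter fun j => F j = s).card ≤
      ∑ s ∈ S, (if s ∈ A₁ then 2 else if s ∈ A₂ then 0 else 1) :=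
    Finset.sum_le_sum hbound
  have hcomp : ∑ s ∈ S, (if s ∈ A₁ then 2 else if s ∈ A₂ then 0 else 1) =
      2 * (S.filter (· ∈ A₁)).card + (S.filter (fun s => s ∉ A₁ ∧ s ∉ A₂)).card := by
    rw [Finset.sum_ite]
    rw [Finset.sum_const, Finset.sum_ite, Finset.sum_const, Finset.sum_const]
    rw [Finset.filter_filter, Finset.filter_filter]
    simp only [smul_eq_mul, mul_zero, mul_one, zero_add]
    omega
  omega

end MengerList

open SimpleGraph

/-- `p` is an `A`–`B` path: a path from `u ∈ A` to `v ∈ B` whose only vertex in `A`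
is `u` and whose only vertex in `B` is `v`. -/
def IsABPath {V : Type*} (G : SimpleGraph V) (A B : Set V) {u v : V}
    (p : G.Walk u v) : Prop :=
  p.IsPath ∧ u ∈ A ∧ v ∈ B ∧ (∀ w ∈ p.support, w ∈ A → w = u) ∧
    (∀ w ∈ p.support, w ∈ B → w = v)

/-- redundancy version of Menger's theorem. -/
theorem stmt_3 {V : Type*} [Fintype V] [DecidableEq V] (G : SimpleGraph V)
    (A₁ A₂ B : Finset V) (hA₁ : A₁.Nonempty) (hA₂ : A₂.Nonempty) (hB : B.Nonempty)
    (h12 : Disjoint A₁ A₂) (h1B : Disjoint A₁ B) (h2B : Disjoint A₂ B)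
    -- the family 𝒫₁ of A₁–B paths in G ∖ A₂
    (hP₁ : ∃ (u v : Fin (2 * A₁.card) → V) (p : ∀ j, G.Walk (u j) (v j)),
      (∀ j, IsABPath G (A₁ : Set V) (B : Set V) (p j)) ∧
      (∀ j, ∀ w ∈ (p j).support, w ∉ A₂) ∧
      (∀ j k, j ≠ k → ∀ w, w ∈ (p j).support → w ∈ (p k).support → w ∈ A₁) ∧
      (∀ a ∈ A₁, (Finset.univ.filter fun j => a ∈ (p j).support).card = 2))
    -- the family 𝒫₂ of A₂–B paths in G ∖ A₁
    (hP₂ : ∃ (u v : Fin (2 * A₂.card) → V) (p : ∀ j, G.Walk (u j) (v j)),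
      (∀ j, IsABPath G (A₂ : Set V) (B : Set V) (p j)) ∧
      (∀ j, ∀ w ∈ (p j).support, w ∉ A₁) ∧
      (∀ j k, j ≠ k → ∀ w, w ∈ (p j).support → w ∈ (p k).support → w ∈ A₂) ∧
      (∀ a ∈ A₂, (Finset.univ.filter fun j => a ∈ (p j).support).card = 2)) :
    ∃ (u v : Fin (A₁.card + A₂.card) → V) (p : ∀ j, G.Walk (u j) (v j)),
      (∀ j, IsABPath G ((A₁ ∪ A₂ : Finset V) : Set V) (B : Set V) (p j)) ∧
      (∀ j k, j ≠ k → ∀ w, w ∈ (p j).support → w ∉ (p k).support) := by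
  classical
  obtain ⟨u₁, v₁, p₁, hP1ab, hP1A₂, hP1int, hP1cnt⟩ := hP₁
  obtain ⟨u₂, v₂, p₂, hP2ab, hP2A₁, hP2int, hP2cnt⟩ := hP₂
  have hsep : ∀ S : Finset V, MengerList.Sep G ↑(A₁ ∪ A₂) ↑B S →
      A₁.card + A₂.card ≤ S.card := by
    intro S hS
    have hc1 := MengerList.count_side G A₁ A₂ B (A₁ ∪ A₂) S _ u₁ v₁ p₁
      (fun j => Finset.mem_coe.1 (hP1ab j).2.1) (fun j => Finset.mem_coe.1 (hP1ab j).2.2.1)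
      hP1A₂ hP1int hP1cnt Finset.subset_union_left hS
    have hc2 := MengerList.count_side G A₂ A₁ B (A₁ ∪ A₂) S _ u₂ v₂ p₂
      (fun j => Finset.mem_coe.1 (hP2ab j).2.1) (fun j => Finset.mem_coe.1 (hP2ab j).2.2.1)
      hP2A₁ hP2int hP2cnt Finset.subset_union_right hS
    have hyeq : (S.filter (fun s => s ∉ A₂ ∧ s ∉ A₁)) =
        (S.filter (fun s => s ∉ A₁ ∧ s ∉ A₂)) :=
      Finset.filter_congr (fun s _ => and_comm)
    rw [hyeq] at hc2
    have hd1 : Disjoint (S.filter (· ∈ A₁)) (S.filter (· ∈ A₂)) := by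
      rw [Finset.disjoint_left]
      intro s hs1 hs2
      rw [Finset.mem_filter] at hs1 hs2
      exact Finset.disjoint_left.1 h12 hs1.2 hs2.2
    have hd2 : Disjoint (S.filter (· ∈ A₁) ∪ S.filter (· ∈ A₂))
        (S.filter (fun s => s ∉ A₁ ∧ s ∉ A₂)) := by
      rw [Finset.disjoint_left]
      intro s hs1 hs2
      rw [Finset.mem_filter] at hs2
      rcases Finset.mem_union.1 hs1 with h | h <;> rw [Finset.mem_filter] at h
      · exact hs2.2.1 h.2
      · exact hs2.2.2 h.2
    have hpart : (S.filter (· ∈ A₁)).card + (S.filter (· ∈ A₂)).card +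
        (S.filter (fun s => s ∉ A₁ ∧ s ∉ A₂)).card ≤ S.card := by
      rw [← Finset.card_union_of_disjoint hd1, ← Finset.card_union_of_disjoint hd2]
      apply Finset.card_le_card
      intro s hs
      rcases Finset.mem_union.1 hs with h | h
      · rcases Finset.mem_union.1 h with h' | h' <;> exact Finset.mem_of_mem_filter _ h'
      · exact Finset.mem_of_mem_filter _ h
    omega
  obtain ⟨f, hf, hd⟩ := MengerList.menger_core G.edgeSet.ncard G le_rfl (A₁ ∪ A₂) B
    (A₁.card + A₂.card) hsep
  refine ⟨fun i => (f i).head (hf i).ne, fun i => (f i).getLast (hf i).ne,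
    fun i => MengerList.toWalk G (f i) (hf i).ne (hf i).chain, ?_, ?_⟩
  · intro i
    have hsupp := MengerList.support_toWalk G (f i) (hf i).ne (hf i).chain
    refine ⟨?_, (hf i).headA, (hf i).lastB, ?_, ?_⟩
    · rw [SimpleGraph.Walk.isPath_def, hsupp]
      exact (hf i).nodup
    · intro w hw hwA
      rw [hsupp] at hw
      exact (hf i).onlyA w hw hwA
    · intro w hw hwB
      rw [hsupp] at hw
      exact (hf i).onlyB w hw hwB
  · intro i j hij w hwi hwj
    rw [MengerList.support_toWalk] at hwi hwj
    exact hd i j hij w hwi hwj
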